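/- (Chain rule) Let U ⊂ W be open, Ω ⊂ H^n open, φ: U → V with graph map Φ(u) = uφ(u) satisfying Φ(U) ⊂ Ω, and f: Ω → R^k. Fix x_W ∈ U and set x = Φ(x_W). If f is Pansu differentiable at x and φ is intrinsic differentiable at x_W, then F = f ∘ Φ is extrinsically differentiable at x_W with respect to (V, x) and d^V_x F(w) = Df(x)(w · dφ_{x_W}(w)) for every w ∈ W. -/

import Mathlib

noncomputable section

open Filter Set
open scoped BigOperators Topology ENNReal

/-- The Heisenberg group product on `ℝ^{2n+1}` in symplectic coordinates. -/
def hmul (n : ℕ) (x y : Fin (2*n+1) → ℝ) : Fin (2*n+1) → ℝ := fun j =>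
  x j + y j + (if (j : ℕ) = 2*n then
    (∑ i : Fin n, (x ⟨(i:ℕ), by omega⟩ * y ⟨(i:ℕ)+n, by omega⟩
      - x ⟨(i:ℕ)+n, by omega⟩ * y ⟨(i:ℕ), by omega⟩)) / 2
  else 0)

/-- Intrinsic dilations of the Heisenberg group. -/
def hdil (n : ℕ) (t : ℝ) (x : Fin (2*n+1) → ℝ) : Fin (2*n+1) → ℝ := fun j =>
  if (j : ℕ) = 2*n then t^2 * x j else t * x j

/-- The horizontal layer `H_1`. -/
def H1set (n : ℕ) : Set (Fin (2*n+1) → ℝ) := {x | x ⟨2*n, by omega⟩ = 0}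

/-- The vertical layer (center) `H_2`. -/
def H2set (n : ℕ) : Set (Fin (2*n+1) → ℝ) := {x | ∀ j : Fin (2*n+1), (j:ℕ) ≠ 2*n → x j = 0}

/-- A homogeneous distance on the Heisenberg group: a distance inducing the standard
topology, left invariant and 1-homogeneous under dilations. -/
structure IsHomDist (n : ℕ) (d : (Fin (2*n+1) → ℝ) → (Fin (2*n+1) → ℝ) → ℝ) : Prop where
  eq_zero_iff : ∀ x y, d x y = 0 ↔ x = y
  symm : ∀ x y, d x y = d y x
  triangle : ∀ x y z, d x z ≤ d x y + d y z
  continuous : Continuous fun p : (Fin (2*n+1) → ℝ) × (Fin (2*n+1) → ℝ) => d p.1 p.2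
  ball_mem_nhds : ∀ x : Fin (2*n+1) → ℝ, ∀ ε > (0:ℝ), {y | d x y < ε} ∈ nhds x
  leftInvariant : ∀ z x y, d (hmul n z x) (hmul n z y) = d x y
  homogeneous : ∀ t > (0:ℝ), ∀ x y, d (hdil n t x) (hdil n t y) = t * d x y

/-- A homogeneous subgroup: a closed subgroup invariant under all dilations. -/
structure IsHomSubgroup (n : ℕ) (S : Set (Fin (2*n+1) → ℝ)) : Prop where
  zero_mem : (0 : Fin (2*n+1) → ℝ) ∈ S
  mul_mem : ∀ x ∈ S, ∀ y ∈ S, hmul n x y ∈ S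
  neg_mem : ∀ x ∈ S, -x ∈ S
  dil_mem : ∀ t > (0:ℝ), ∀ x ∈ S, hdil n t x ∈ S
  closed : IsClosed S

/-- A vertical subgroup contains the center `H_2`. -/
def IsVertical (n : ℕ) (S : Set (Fin (2*n+1) → ℝ)) : Prop := IsHomSubgroup n S ∧ H2set n ⊆ S

/-- A horizontal subgroup is contained in `H_1`. -/
def IsHorizontal (n : ℕ) (S : Set (Fin (2*n+1) → ℝ)) : Prop := IsHomSubgroup n S ∧ S ⊆ H1set n

/-- `H^n = W ⋊ V`. -/
def IsSemidirect (n : ℕ) (W V : Set (Fin (2*n+1) → ℝ)) : Prop :=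
  (∀ x, ∃ w ∈ W, ∃ v ∈ V, x = hmul n w v) ∧ W ∩ V = {0}

/-- An h-homomorphism with values in `ℝ^k`. -/
def IsHHomMap (n k : ℕ) (L : (Fin (2*n+1) → ℝ) → EuclideanSpace ℝ (Fin k)) : Prop :=
  (∀ p q, L (hmul n p q) = L p + L q) ∧ (∀ t > (0:ℝ), ∀ p, L (hdil n t p) = t • L p)

/-- An h-homomorphism of the Heisenberg group into itself. -/
def IsHHomH (n : ℕ) (L : (Fin (2*n+1) → ℝ) → (Fin (2*n+1) → ℝ)) : Prop :=
  (∀ p q, L (hmul n p q) = hmul n (L p) (L q)) ∧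
  (∀ t > (0:ℝ), ∀ p, L (hdil n t p) = hdil n t (L p))

/-- Pansu differentiability of `f` at `x` with h-differential `Df`. -/
def PansuDiffAt (n k : ℕ) (d : (Fin (2*n+1) → ℝ) → (Fin (2*n+1) → ℝ) → ℝ)
    (f : (Fin (2*n+1) → ℝ) → EuclideanSpace ℝ (Fin k))
    (Df : (Fin (2*n+1) → ℝ) → EuclideanSpace ℝ (Fin k)) (x : Fin (2*n+1) → ℝ) : Prop :=
  IsHHomMap n k Df ∧
  Tendsto (fun w => ‖f (hmul n x w) - f x - Df w‖ / d w 0)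
    (𝓝[{(0 : Fin (2*n+1) → ℝ)}ᶜ] 0) (𝓝 0)

/-- Intrinsic differentiability at `ζ ∈ W` of `φ : W ⊇ U → V`, with intrinsic
differential `L`, relative to the splitting `(W, V)`; here `x = ζ·φ(ζ)` and
`φ_{x⁻¹}(w) = φ(ζ)⁻¹ · φ(x · w · φ(ζ)⁻¹)`. -/
def IntrinsicDiffAt (n : ℕ) (d : (Fin (2*n+1) → ℝ) → (Fin (2*n+1) → ℝ) → ℝ)
    (W V : Set (Fin (2*n+1) → ℝ))
    (φ : (Fin (2*n+1) → ℝ) → (Fin (2*n+1) → ℝ))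
    (L : (Fin (2*n+1) → ℝ) → (Fin (2*n+1) → ℝ)) (ζ : Fin (2*n+1) → ℝ) : Prop :=
  IsHHomH n L ∧ L '' W ⊆ V ∧
  Tendsto (fun w => d (L w)
      (hmul n (-(φ ζ)) (φ (hmul n (hmul n (hmul n ζ (φ ζ)) w) (-(φ ζ))))) / d w 0)
    (𝓝[W \ {0}] 0) (𝓝 0)

section AuxAlg

/-- index of the central coordinate -/
def lIdx (n : ℕ) : Fin (2*n+1) := ⟨2*n, by omega⟩

/-- the symplectic form -/
def ωS (n : ℕ) (x y : Fin (2*n+1) → ℝ) : ℝ :=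
  ∑ i : Fin n, (x ⟨(i:ℕ), by omega⟩ * y ⟨(i:ℕ)+n, by omega⟩
    - x ⟨(i:ℕ)+n, by omega⟩ * y ⟨(i:ℕ), by omega⟩)

/-- the central basis vector -/
def Ev (n : ℕ) : Fin (2*n+1) → ℝ := fun j => if (j:ℕ) = 2*n then 1 else 0

/-- horizontal part -/
def hpart (n : ℕ) (p : Fin (2*n+1) → ℝ) : Fin (2*n+1) → ℝ :=
  fun j => if (j:ℕ) = 2*n then 0 else p j

/-- a vector is central -/
def isC (n : ℕ) (c : Fin (2*n+1) → ℝ) : Prop := ∀ j : Fin (2*n+1), (j:ℕ) ≠ 2*n → c j = 0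

lemma hmul_apply_ne (n : ℕ) (x y : Fin (2*n+1) → ℝ) (j : Fin (2*n+1)) (hj : (j:ℕ) ≠ 2*n) :
    hmul n x y j = x j + y j := by simp [hmul, hj]

lemma hmul_apply_last (n : ℕ) (x y : Fin (2*n+1) → ℝ) :
    hmul n x y (lIdx n) = x (lIdx n) + y (lIdx n) + ωS n x y / 2 := by
  simp [hmul, lIdx, ωS]

lemma idx1_ne (n : ℕ) (i : Fin n) : ((⟨(i:ℕ), by omega⟩ : Fin (2*n+1)) : ℕ) ≠ 2*n := by
  have := i.isLt; simp; omega

lemma idx2_ne (n : ℕ) (i : Fin n) : ((⟨(i:ℕ)+n, by omega⟩ : Fin (2*n+1)) : ℕ) ≠ 2*n := by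
  have := i.isLt; simp; omega

lemma ωS_self (n : ℕ) (v : Fin (2*n+1) → ℝ) : ωS n v v = 0 := by
  unfold ωS; apply Finset.sum_eq_zero; intro i _; ring

lemma ωS_central_right (n : ℕ) (x c : Fin (2*n+1) → ℝ) (hc : isC n c) : ωS n x c = 0 := by
  unfold ωS; apply Finset.sum_eq_zero; intro i _
  rw [hc _ (idx1_ne n i), hc _ (idx2_ne n i)]; ring

lemma ωS_central_left (n : ℕ) (c x : Fin (2*n+1) → ℝ) (hc : isC n c) : ωS n c x = 0 := by
  unfold ωS; apply Finset.sum_eq_zero; intro i _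
  rw [hc _ (idx1_ne n i), hc _ (idx2_ne n i)]; ring

lemma ωS_hmul_left (n : ℕ) (x y z : Fin (2*n+1) → ℝ) :
    ωS n (hmul n x y) z = ωS n x z + ωS n y z := by
  unfold ωS; rw [← Finset.sum_add_distrib]
  apply Finset.sum_congr rfl; intro i _
  rw [hmul_apply_ne n x y _ (idx1_ne n i), hmul_apply_ne n x y _ (idx2_ne n i)]; ring

lemma ωS_hmul_right (n : ℕ) (x y z : Fin (2*n+1) → ℝ) :
    ωS n x (hmul n y z) = ωS n x y + ωS n x z := by
  unfold ωS; rw [← Finset.sum_add_distrib]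
  apply Finset.sum_congr rfl; intro i _
  rw [hmul_apply_ne n y z _ (idx1_ne n i), hmul_apply_ne n y z _ (idx2_ne n i)]; ring

lemma fin_eq_last (n : ℕ) (j : Fin (2*n+1)) (hj : (j:ℕ) = 2*n) : j = lIdx n := by
  apply Fin.ext; simpa [lIdx] using hj

lemma hmul_assoc (n : ℕ) (x y z : Fin (2*n+1) → ℝ) :
    hmul n (hmul n x y) z = hmul n x (hmul n y z) := by
  funext j
  by_cases hj : (j:ℕ) = 2*n
  · rcases fin_eq_last n j hj with rfl
    rw [hmul_apply_last, hmul_apply_last, hmul_apply_last, hmul_apply_last,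
      ωS_hmul_left, ωS_hmul_right]
    ring
  · rw [hmul_apply_ne _ _ _ _ hj, hmul_apply_ne _ _ _ _ hj, hmul_apply_ne _ _ _ _ hj,
      hmul_apply_ne _ _ _ _ hj]
    ring

lemma hmul_zero_left (n : ℕ) (x : Fin (2*n+1) → ℝ) : hmul n 0 x = x := by
  funext j
  by_cases hj : (j:ℕ) = 2*n
  · rcases fin_eq_last n j hj with rfl
    rw [hmul_apply_last]
    have : ωS n 0 x = 0 := ωS_central_left n 0 x (fun _ _ => rfl)
    simp [this]
  · rw [hmul_apply_ne _ _ _ _ hj]; simp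

lemma hmul_zero_right (n : ℕ) (x : Fin (2*n+1) → ℝ) : hmul n x 0 = x := by
  funext j
  by_cases hj : (j:ℕ) = 2*n
  · rcases fin_eq_last n j hj with rfl
    rw [hmul_apply_last]
    have : ωS n x 0 = 0 := ωS_central_right n x 0 (fun _ _ => rfl)
    simp [this]
  · rw [hmul_apply_ne _ _ _ _ hj]; simp

lemma ωS_neg_right (n : ℕ) (x : Fin (2*n+1) → ℝ) : ωS n x (-x) = 0 := by
  unfold ωS; apply Finset.sum_eq_zero; intro i _; simp; ring

lemma ωS_neg_left (n : ℕ) (x : Fin (2*n+1) → ℝ) : ωS n (-x) x = 0 := by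
  unfold ωS; apply Finset.sum_eq_zero; intro i _; simp; ring

lemma hmul_neg_self (n : ℕ) (x : Fin (2*n+1) → ℝ) : hmul n x (-x) = 0 := by
  funext j
  by_cases hj : (j:ℕ) = 2*n
  · rcases fin_eq_last n j hj with rfl
    rw [hmul_apply_last, ωS_neg_right]; simp
  · rw [hmul_apply_ne _ _ _ _ hj]; simp

lemma hmul_neg_self' (n : ℕ) (x : Fin (2*n+1) → ℝ) : hmul n (-x) x = 0 := by
  funext j
  by_cases hj : (j:ℕ) = 2*n
  · rcases fin_eq_last n j hj with rfl
    rw [hmul_apply_last, ωS_neg_left]; simp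
  · rw [hmul_apply_ne _ _ _ _ hj]; simp

lemma eq_neg_of_hmul_eq_zero (n : ℕ) (a b : Fin (2*n+1) → ℝ) (h : hmul n a b = 0) :
    b = -a := by
  have : hmul n (-a) (hmul n a b) = hmul n (-a) 0 := by rw [h]
  rw [← hmul_assoc, hmul_neg_self', hmul_zero_left, hmul_zero_right] at this
  exact this

lemma hmul_central_right (n : ℕ) (x c : Fin (2*n+1) → ℝ) (hc : isC n c) :
    hmul n x c = x + c := by
  funext j
  by_cases hj : (j:ℕ) = 2*n
  · rcases fin_eq_last n j hj with rfl
    rw [hmul_apply_last, ωS_central_right n x c hc]; simp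
  · rw [hmul_apply_ne _ _ _ _ hj]; simp

lemma hmul_central_left (n : ℕ) (c x : Fin (2*n+1) → ℝ) (hc : isC n c) :
    hmul n c x = c + x := by
  funext j
  by_cases hj : (j:ℕ) = 2*n
  · rcases fin_eq_last n j hj with rfl
    rw [hmul_apply_last, ωS_central_left n c x hc]; simp
  · rw [hmul_apply_ne _ _ _ _ hj]; simp

lemma isC_smul_Ev (n : ℕ) (t : ℝ) : isC n (t • Ev n) := by
  intro j hj; simp [Ev, hj]

lemma hmul_self (n : ℕ) (v : Fin (2*n+1) → ℝ) : hmul n v v = (2:ℝ) • v := by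
  funext j
  by_cases hj : (j:ℕ) = 2*n
  · rcases fin_eq_last n j hj with rfl
    rw [hmul_apply_last, ωS_self]; simp; ring
  · rw [hmul_apply_ne _ _ _ _ hj]; simp; ring

lemma hdil_comp (n : ℕ) (s t : ℝ) (p : Fin (2*n+1) → ℝ) :
    hdil n s (hdil n t p) = hdil n (s*t) p := by
  funext j; by_cases hj : (j:ℕ) = 2*n <;> simp [hdil, hj] <;> ring

lemma hdil_one (n : ℕ) (p : Fin (2*n+1) → ℝ) : hdil n 1 p = p := by
  funext j; by_cases hj : (j:ℕ) = 2*n <;> simp [hdil, hj]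

lemma hdil_zero_vec (n : ℕ) (t : ℝ) : hdil n t (0 : Fin (2*n+1) → ℝ) = 0 := by
  funext j; by_cases hj : (j:ℕ) = 2*n <;> simp [hdil, hj]

lemma hdil_horiz (n : ℕ) (t : ℝ) (p : Fin (2*n+1) → ℝ) (hp : p (lIdx n) = 0) :
    hdil n t p = t • p := by
  funext j
  by_cases hj : (j:ℕ) = 2*n
  · rcases fin_eq_last n j hj with rfl
    simp [hdil, lIdx] at hp ⊢; simp [hp]
  · simp [hdil, hj]

lemma hdil_central (n : ℕ) (t : ℝ) (c : Fin (2*n+1) → ℝ) (hc : isC n c) :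
    hdil n t c = (t^2) • c := by
  funext j
  by_cases hj : (j:ℕ) = 2*n
  · simp [hdil, hj]
  · simp [hdil, hj, hc j hj]

lemma hpart_decomp (n : ℕ) (p : Fin (2*n+1) → ℝ) :
    p = hmul n (hpart n p) ((p (lIdx n)) • Ev n) := by
  rw [hmul_central_right n _ _ (isC_smul_Ev n _)]
  funext j
  by_cases hj : (j:ℕ) = 2*n
  · rcases fin_eq_last n j hj with rfl
    simp [hpart, Ev, lIdx]
  · simp [hpart, Ev, hj]

lemma hpart_eq_hmul (n : ℕ) (p : Fin (2*n+1) → ℝ) :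
    hpart n p = hmul n p ((-(p (lIdx n))) • Ev n) := by
  rw [hmul_central_right n _ _ (isC_smul_Ev n _)]
  funext j
  by_cases hj : (j:ℕ) = 2*n
  · rcases fin_eq_last n j hj with rfl
    simp [hpart, Ev, lIdx]
  · simp [hpart, Ev, hj]

lemma hmul_eq_add (n : ℕ) (x y : Fin (2*n+1) → ℝ) :
    hmul n x y = x + y + (ωS n x y / 2) • Ev n := by
  funext j
  by_cases hj : (j:ℕ) = 2*n
  · rcases fin_eq_last n j hj with rfl
    rw [hmul_apply_last]; simp [Ev, lIdx]
  · rw [hmul_apply_ne _ _ _ _ hj]; simp [Ev, hj]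

lemma add_eq_hmul (n : ℕ) (x y : Fin (2*n+1) → ℝ) :
    x + y = hmul n (hmul n x y) ((-(ωS n x y / 2)) • Ev n) := by
  rw [hmul_central_right n _ _ (isC_smul_Ev n _), hmul_eq_add]
  funext j; simp

lemma hpart_last (n : ℕ) (p : Fin (2*n+1) → ℝ) : hpart n p (lIdx n) = 0 := by
  simp [hpart, lIdx]

end AuxAlg

section AuxGauge

/-- homogeneous gauge -/
def hgauge (n : ℕ) (p : Fin (2*n+1) → ℝ) : ℝ :=
  max ‖hpart n p‖ (Real.sqrt |p (lIdx n)|)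

lemma hgauge_nonneg (n : ℕ) (p : Fin (2*n+1) → ℝ) : 0 ≤ hgauge n p :=
  le_trans (norm_nonneg _) (le_max_left _ _)

lemma hpart_zero (n : ℕ) : hpart n (0 : Fin (2*n+1) → ℝ) = 0 := by
  funext j; by_cases hj : (j:ℕ) = 2*n <;> simp [hpart, hj]

lemma hgauge_zero (n : ℕ) : hgauge n 0 = 0 := by
  simp [hgauge, hpart_zero]

lemma hgauge_eq_zero_iff (n : ℕ) (p : Fin (2*n+1) → ℝ) : hgauge n p = 0 ↔ p = 0 := by
  constructor
  · intro h
    have h1 : ‖hpart n p‖ = 0 := le_antisymm (h ▸ le_max_left _ _) (norm_nonneg _)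
    have h2 : Real.sqrt |p (lIdx n)| = 0 := le_antisymm (h ▸ le_max_right _ _) (Real.sqrt_nonneg _)
    have h1' : hpart n p = 0 := norm_eq_zero.mp h1
    have h2' : p (lIdx n) = 0 := by
      have := Real.sqrt_eq_zero (abs_nonneg _) |>.mp h2
      exact abs_eq_zero.mp this
    funext j
    by_cases hj : (j:ℕ) = 2*n
    · rcases fin_eq_last n j hj with rfl; exact h2'
    · have := congrFun h1' j; simpa [hpart, hj] using this
  · rintro rfl; exact hgauge_zero n

lemma hpart_hdil (n : ℕ) (t : ℝ) (p : Fin (2*n+1) → ℝ) :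
    hpart n (hdil n t p) = t • hpart n p := by
  funext j; by_cases hj : (j:ℕ) = 2*n <;> simp [hpart, hdil, hj]

lemma hgauge_hdil (n : ℕ) (t : ℝ) (ht : 0 ≤ t) (p : Fin (2*n+1) → ℝ) :
    hgauge n (hdil n t p) = t * hgauge n p := by
  unfold hgauge
  rw [hpart_hdil, norm_smul]
  have h1 : ‖t‖ = t := by rw [Real.norm_eq_abs, abs_of_nonneg ht]
  have h2 : hdil n t p (lIdx n) = t^2 * p (lIdx n) := by simp [hdil, lIdx]
  rw [h1, h2]
  have h3 : Real.sqrt |t^2 * p (lIdx n)| = t * Real.sqrt |p (lIdx n)| := by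
    rw [abs_mul, Real.sqrt_mul (abs_nonneg _), abs_of_nonneg (sq_nonneg t),
      Real.sqrt_sq ht]
  rw [h3]
  rcases le_total (‖hpart n p‖) (Real.sqrt |p (lIdx n)|) with h | h
  · rw [max_eq_right h, max_eq_right (mul_le_mul_of_nonneg_left h ht)]
  · rw [max_eq_left h, max_eq_left (mul_le_mul_of_nonneg_left h ht)]

lemma norm_le_hgauge (n : ℕ) (p : Fin (2*n+1) → ℝ) :
    ‖p‖ ≤ hgauge n p + (hgauge n p)^2 := by
  have hρ := hgauge_nonneg n p
  apply pi_norm_le_iff_of_nonneg (by positivity) |>.mpr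
  intro j
  rw [Real.norm_eq_abs]
  by_cases hj : (j:ℕ) = 2*n
  · rcases fin_eq_last n j hj with rfl
    have h1 : Real.sqrt |p (lIdx n)| ≤ hgauge n p := le_max_right _ _
    have h2 : |p (lIdx n)| ≤ (hgauge n p)^2 := by
      have := Real.sq_sqrt (abs_nonneg (p (lIdx n)))
      nlinarith [Real.sqrt_nonneg |p (lIdx n)|]
    linarith
  · have h1 : |p j| = |hpart n p j| := by simp [hpart, hj]
    have h2 : |hpart n p j| ≤ ‖hpart n p‖ := by
      have := norm_le_pi_norm (hpart n p) j
      simpa [Real.norm_eq_abs] using this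
    have h3 : ‖hpart n p‖ ≤ hgauge n p := le_max_left _ _
    nlinarith

lemma hpart_norm_le_hgauge (n : ℕ) (p : Fin (2*n+1) → ℝ) : ‖hpart n p‖ ≤ hgauge n p :=
  le_max_left _ _

lemma continuous_hgauge (n : ℕ) : Continuous (hgauge n) := by
  apply Continuous.max
  · exact (continuous_pi fun j => by
      by_cases hj : (j:ℕ) = 2*n <;> simp [hpart, hj]
      · exact continuous_const
      · exact continuous_apply j).norm
  · exact Real.continuous_sqrt.comp ((continuous_apply (lIdx n)).abs)

section DistFacts

variable {n : ℕ} {d : (Fin (2*n+1) → ℝ) → (Fin (2*n+1) → ℝ) → ℝ}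

lemma d_self (hd : IsHomDist n d) (x : Fin (2*n+1) → ℝ) : d x x = 0 := (hd.eq_zero_iff x x).mpr rfl

lemma d_nonneg (hd : IsHomDist n d) (x y : Fin (2*n+1) → ℝ) : 0 ≤ d x y := by
  have h1 := hd.triangle x y x
  have h2 := hd.symm y x
  have h3 := d_self hd x
  linarith

lemma d_eq_hmul (hd : IsHomDist n d) (a b : Fin (2*n+1) → ℝ) : d a b = d (hmul n (-b) a) 0 := by
  have h := hd.leftInvariant b (hmul n (-b) a) 0
  rw [hmul_zero_right, ← hmul_assoc, hmul_neg_self, hmul_zero_left] at h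
  rw [← h, hd.symm]

/-- two-sided comparison between `d(·,0)` and the gauge -/
lemma dist_compare (hd : IsHomDist n d) : ∃ c > (0:ℝ), ∃ C > (0:ℝ), ∀ p,
    c * hgauge n p ≤ d p 0 ∧ d p 0 ≤ C * hgauge n p := by
  classical
  set S : Set (Fin (2*n+1) → ℝ) := {p | hgauge n p = 1} with hS
  have hSc : IsCompact S := by
    apply IsCompact.of_isClosed_subset (isCompact_closedBall (0 : Fin (2*n+1) → ℝ) 2)
    · exact isClosed_eq (continuous_hgauge n) continuous_const
    · intro p hp
      have : hgauge n p = 1 := hp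
      have h2 := norm_le_hgauge n p
      rw [this] at h2
      simp only [Metric.mem_closedBall, dist_zero_right]
      linarith
  have hES : Ev n ∈ S := by
    have h1 : hpart n (Ev n) = 0 := by
      funext j; by_cases hj : (j:ℕ) = 2*n <;> simp [hpart, Ev, hj]
    have h2 : (Ev n) (lIdx n) = 1 := by simp [Ev, lIdx]
    simp [hS, hgauge, h1, h2]
  have hcont : ContinuousOn (fun p => d p 0) S :=
    (hd.continuous.comp (continuous_id.prodMk continuous_const)).continuousOn
  obtain ⟨a, haS, ha⟩ := hSc.exists_isMinOn ⟨Ev n, hES⟩ hcont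
  obtain ⟨b, hbS, hb⟩ := hSc.exists_isMaxOn ⟨Ev n, hES⟩ hcont
  have ha0 : a ≠ 0 := by
    intro h; rw [h] at haS; simp [hS, hgauge_zero] at haS
  have hc : 0 < d a 0 := by
    rcases lt_or_eq_of_le (d_nonneg hd a 0) with h | h
    · exact h
    · exact absurd ((hd.eq_zero_iff a 0).mp h.symm) ha0
  refine ⟨d a 0, hc, d b 0, lt_of_lt_of_le hc (ha hbS), ?_⟩
  intro p
  by_cases hp : p = 0
  · subst hp; rw [d_self hd, hgauge_zero]; simp
  · have ht : 0 < hgauge n p := by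
      rcases lt_or_eq_of_le (hgauge_nonneg n p) with h | h
      · exact h
      · exact absurd ((hgauge_eq_zero_iff n p).mp h.symm) hp
    set t := hgauge n p
    set u := hdil n t⁻¹ p with hu
    have hu1 : hgauge n u = 1 := by
      rw [hu, hgauge_hdil n _ (le_of_lt (inv_pos.mpr ht))]
      field_simp
      rfl
    have hpu : p = hdil n t u := by
      rw [hu, hdil_comp, mul_inv_cancel₀ (ne_of_gt ht), hdil_one]
    have hd0 : d p 0 = t * d u 0 := by
      calc d p 0 = d (hdil n t u) (hdil n t 0) := by rw [← hpu, hdil_zero_vec]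
      _ = t * d u 0 := hd.homogeneous t ht _ _
    constructor
    · rw [hd0, mul_comm]
      exact mul_le_mul_of_nonneg_left (ha hu1) (le_of_lt ht)
    · rw [hd0, mul_comm (d b 0) t]
      exact mul_le_mul_of_nonneg_left (hb hu1) (le_of_lt ht)

end DistFacts

end AuxGauge

section AuxHom

variable {n k : ℕ}

lemma sqrt2_lt_two : Real.sqrt 2 < 2 := by
  nlinarith [Real.sq_sqrt (by norm_num : (0:ℝ) ≤ 2), Real.sqrt_nonneg 2]

section DfLemmas

variable {Df : (Fin (2*n+1) → ℝ) → EuclideanSpace ℝ (Fin k)}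

lemma Df_central (hDf : IsHHomMap n k Df) (c : Fin (2*n+1) → ℝ) (hc : isC n c) :
    Df c = 0 := by
  have e1 : Df ((2:ℝ) • c) = Df c + Df c := by
    rw [← hmul_self n c]; exact hDf.1 c c
  have e2 : Df ((2:ℝ) • c) = Real.sqrt 2 • Df c := by
    have h2 : hdil n (Real.sqrt 2) c = (2:ℝ) • c := by
      rw [hdil_central n _ c hc, Real.sq_sqrt (by norm_num : (0:ℝ) ≤ 2)]
    rw [← h2]
    exact hDf.2 _ (Real.sqrt_pos.mpr (by norm_num)) c
  have e3 : ((2:ℝ) - Real.sqrt 2) • Df c = 0 := by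
    rw [sub_smul, sub_eq_zero, ← e2, e1, two_smul]
  rcases smul_eq_zero.mp e3 with h | h
  · exact absurd h (by have := sqrt2_lt_two; intro hh; linarith [sub_eq_zero.mp hh])
  · exact h

lemma Df_zero (hDf : IsHHomMap n k Df) : Df 0 = 0 :=
  Df_central hDf 0 (fun _ _ => rfl)

lemma Df_add (hDf : IsHHomMap n k Df) (p q : Fin (2*n+1) → ℝ) :
    Df (p + q) = Df p + Df q := by
  rw [add_eq_hmul n p q, hDf.1, hDf.1,
    Df_central hDf _ (isC_smul_Ev n _), add_zero]

lemma Df_neg (hDf : IsHHomMap n k Df) (p : Fin (2*n+1) → ℝ) : Df (-p) = -Df p := by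
  have : Df (p + (-p)) = Df p + Df (-p) := Df_add hDf p (-p)
  simp [Df_zero hDf] at this
  exact eq_neg_of_add_eq_zero_right this.symm

lemma Df_hpart (hDf : IsHHomMap n k Df) (p : Fin (2*n+1) → ℝ) :
    Df p = Df (hpart n p) := by
  conv_lhs => rw [hpart_decomp n p]
  rw [hDf.1, Df_central hDf _ (isC_smul_Ev n _), add_zero]

lemma Df_smul (hDf : IsHHomMap n k Df) (t : ℝ) (p : Fin (2*n+1) → ℝ) :
    Df (t • p) = t • Df p := by
  have hpos : ∀ s > (0:ℝ), ∀ q : Fin (2*n+1) → ℝ, Df (s • q) = s • Df q := by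
    intro s hs q
    rw [Df_hpart hDf (s • q)]
    have h1 : hpart n (s • q) = s • hpart n q := by
      funext j; by_cases hj : (j:ℕ) = 2*n <;> simp [hpart, hj]
    rw [h1, ← hdil_horiz n s _ (hpart_last n q), hDf.2 s hs, ← Df_hpart hDf]
  rcases lt_trichotomy t 0 with ht | ht | ht
  · have : t • p = -((-t) • p) := by simp
    rw [this, Df_neg hDf, hpos (-t) (by linarith) p]
    simp
  · subst ht; simp [Df_zero hDf]
  · exact hpos t ht p

lemma Df_bound (hDf : IsHHomMap n k Df) :
    ∃ K ≥ (0:ℝ), ∀ p, ‖Df p‖ ≤ K * ‖hpart n p‖ := by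
  let ℓ : (Fin (2*n+1) → ℝ) →ₗ[ℝ] EuclideanSpace ℝ (Fin k) :=
    { toFun := Df, map_add' := Df_add hDf, map_smul' := Df_smul hDf }
  let ℓ' := LinearMap.toContinuousLinearMap ℓ
  refine ⟨‖ℓ'‖, norm_nonneg _, fun p => ?_⟩
  calc ‖Df p‖ = ‖ℓ' (hpart n p)‖ := by rw [Df_hpart hDf]; rfl
  _ ≤ ‖ℓ'‖ * ‖hpart n p‖ := ℓ'.le_opNorm _

lemma Df_hmul_diff (hDf : IsHHomMap n k Df) (a b : Fin (2*n+1) → ℝ) :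
    Df (hmul n (-b) a) = Df a - Df b := by
  rw [hDf.1, Df_neg hDf]; abel

end DfLemmas

section LLemmas

variable {L : (Fin (2*n+1) → ℝ) → (Fin (2*n+1) → ℝ)}
variable {W V : Set (Fin (2*n+1) → ℝ)}

lemma L_zero (hLh : IsHHomH n L) : L 0 = 0 := by
  have h1 : L 0 = hmul n (L 0) (L 0) := by
    conv_lhs => rw [← hmul_zero_left n 0]
    exact hLh.1 0 0
  have h2 : hmul n (-(L 0)) (L 0) = 0 := hmul_neg_self' n (L 0)
  calc L 0 = hmul n 0 (L 0) := by rw [hmul_zero_left]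
  _ = hmul n (hmul n (-(L 0)) (L 0)) (L 0) := by rw [h2]
  _ = hmul n (-(L 0)) (hmul n (L 0) (L 0)) := hmul_assoc n _ _ _
  _ = hmul n (-(L 0)) (L 0) := by rw [← h1]
  _ = 0 := h2

lemma L_neg (hLh : IsHHomH n L) (p : Fin (2*n+1) → ℝ) : L (-p) = -(L p) := by
  apply eq_neg_of_hmul_eq_zero
  rw [← hLh.1, hmul_neg_self, L_zero hLh]

lemma V_hmul_add (hV : IsHorizontal n V) (a b : Fin (2*n+1) → ℝ)
    (ha : a ∈ V) (hb : b ∈ V) : hmul n a b = a + b := by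
  have hab : hmul n a b ∈ V := hV.1.mul_mem a ha b hb
  have hal : a (lIdx n) = 0 := hV.2 ha
  have hbl : b (lIdx n) = 0 := hV.2 hb
  have habl : hmul n a b (lIdx n) = 0 := hV.2 hab
  funext j
  by_cases hj : (j:ℕ) = 2*n
  · rcases fin_eq_last n j hj with rfl
    rw [habl]; simp [hal, hbl]
  · rw [hmul_apply_ne _ _ _ _ hj]; simp

lemma L_central (hLh : IsHHomH n L) (hW : IsVertical n W) (hV : IsHorizontal n V)
    (hLV : L '' W ⊆ V) (c : Fin (2*n+1) → ℝ) (hc : isC n c) : L c = 0 := by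
  have hcW : c ∈ W := hW.2 hc
  have hLcV : L c ∈ V := hLV ⟨c, hcW, rfl⟩
  have hlast : L c (lIdx n) = 0 := hV.2 hLcV
  have e1 : hdil n (Real.sqrt 2) (L c) = (2:ℝ) • L c := by
    have h2 : hdil n (Real.sqrt 2) c = (2:ℝ) • c := by
      rw [hdil_central n _ c hc, Real.sq_sqrt (by norm_num : (0:ℝ) ≤ 2)]
    calc hdil n (Real.sqrt 2) (L c) = L (hdil n (Real.sqrt 2) c) :=
          (hLh.2 _ (Real.sqrt_pos.mpr (by norm_num)) c).symm
    _ = L (hmul n c c) := by rw [h2, ← hmul_self n c]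
    _ = hmul n (L c) (L c) := hLh.1 c c
    _ = (2:ℝ) • L c := hmul_self n (L c)
  funext j
  by_cases hj : (j:ℕ) = 2*n
  · rcases fin_eq_last n j hj with rfl; exact hlast
  · have := congrFun e1 j
    simp [hdil, hj] at this
    have hs2 := sqrt2_lt_two
    rcases this with h | h
    · linarith
    · simpa using h

lemma L_kill (hLh : IsHHomH n L) (hW : IsVertical n W) (hV : IsHorizontal n V)
    (hLV : L '' W ⊆ V) (w c : Fin (2*n+1) → ℝ) (hc : isC n c) :
    L (hmul n w c) = L w := by
  rw [hLh.1, L_central hLh hW hV hLV c hc, hmul_zero_right]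

lemma L_bound (hLh : IsHHomH n L) (hW : IsVertical n W) (hV : IsHorizontal n V)
    (hLV : L '' W ⊆ V) :
    ∃ K ≥ (0:ℝ), ∀ w ∈ W, ‖L w‖ ≤ K * ‖hpart n w‖ := by
  classical
  have hWs := hW.1
  -- the horizontal part of `W` is a linear subspace
  have hWadd : ∀ p q : Fin (2*n+1) → ℝ, p ∈ W → q ∈ W → p + q ∈ W := by
    intro p q hp hq
    rw [add_eq_hmul n p q]
    exact hWs.mul_mem _ (hWs.mul_mem p hp q hq) _ (hW.2 (isC_smul_Ev n _))
  have hWsmul : ∀ (t : ℝ) (p : Fin (2*n+1) → ℝ), p ∈ W → p (lIdx n) = 0 → t • p ∈ W := by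
    intro t p hp hpl
    rcases lt_trichotomy t 0 with ht | ht | ht
    · have : t • p = -((-t) • p) := by simp
      rw [this, ← hdil_horiz n (-t) p hpl]
      exact hWs.neg_mem _ (hWs.dil_mem (-t) (by linarith) p hp)
    · subst ht; simpa using hWs.zero_mem
    · rw [← hdil_horiz n t p hpl]; exact hWs.dil_mem t ht p hp
  let Wh : Submodule ℝ (Fin (2*n+1) → ℝ) :=
    { carrier := {p | p ∈ W ∧ p (lIdx n) = 0}
      add_mem' := by
        rintro p q ⟨hpW, hpl⟩ ⟨hqW, hql⟩
        exact ⟨hWadd p q hpW hqW, by simp [hpl, hql]⟩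
      zero_mem' := ⟨hWs.zero_mem, rfl⟩
      smul_mem' := by
        rintro t p ⟨hpW, hpl⟩
        exact ⟨hWsmul t p hpW hpl, by simp [hpl]⟩ }
  have hLlast : ∀ w ∈ W, L w (lIdx n) = 0 := fun w hw => hV.2 (hLV ⟨w, hw, rfl⟩)
  have hLpos : ∀ t > (0:ℝ), ∀ p ∈ W, p (lIdx n) = 0 → L (t • p) = t • L p := by
    intro t ht p hpW hpl
    rw [← hdil_horiz n t p hpl, hLh.2 t ht, hdil_horiz n t _ (hLlast p hpW)]
  let ℓ : Wh →ₗ[ℝ] (Fin (2*n+1) → ℝ) :=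
    { toFun := fun p => L p.1
      map_add' := by
        rintro ⟨p, hpW, hpl⟩ ⟨q, hqW, hql⟩
        show L (p + q) = L p + L q
        rw [add_eq_hmul n p q, L_kill hLh hW hV hLV _ _ (isC_smul_Ev n _), hLh.1]
        exact V_hmul_add hV _ _ (hLV ⟨p, hpW, rfl⟩) (hLV ⟨q, hqW, rfl⟩)
      map_smul' := by
        rintro t ⟨p, hpW, hpl⟩
        show L (t • p) = t • L p
        rcases lt_trichotomy t 0 with ht | ht | ht
        · have h1 : t • p = -((-t) • p) := by simp
          rw [h1, L_neg hLh, hLpos (-t) (by linarith) p hpW hpl]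
          simp
        · subst ht; simp [L_zero hLh]
        · exact hLpos t ht p hpW hpl }
  let ℓ' := LinearMap.toContinuousLinearMap ℓ
  refine ⟨‖ℓ'‖, norm_nonneg ℓ', fun w hw => ?_⟩
  have hmem : hpart n w ∈ Wh := by
    constructor
    · rw [hpart_eq_hmul n w]
      exact hWs.mul_mem w hw _ (hW.2 (isC_smul_Ev n _))
    · exact hpart_last n w
  have hLw : L w = L (hpart n w) := by
    conv_lhs => rw [hpart_decomp n w]
    exact L_kill hLh hW hV hLV _ _ (isC_smul_Ev n _)
  calc ‖L w‖ = ‖ℓ' ⟨hpart n w, hmem⟩‖ := by rw [hLw]; rfl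
  _ ≤ ‖ℓ'‖ * ‖(⟨hpart n w, hmem⟩ : Wh)‖ := ℓ'.le_opNorm _
  _ = ‖ℓ'‖ * ‖hpart n w‖ := rfl

end LLemmas

end AuxHom

lemma hpart_norm_le_norm (n : ℕ) (p : Fin (2*n+1) → ℝ) : ‖hpart n p‖ ≤ ‖p‖ := by
  apply pi_norm_le_iff_of_nonneg (norm_nonneg p) |>.mpr
  intro j
  by_cases hj : (j:ℕ) = 2*n
  · simp [hpart, hj]
  · simpa [hpart, hj] using norm_le_pi_norm p j

/-- Chain rule: if `f` is Pansu differentiable at `x = Φ(x_W)` and `φ` is intrinsic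
differentiable at `x_W ∈ U ⊆ W` with intrinsic differential `L`, then `F = f ∘ Φ` is
extrinsically differentiable at `x_W` with respect to `(V, x)`, with extrinsic
differential `w ↦ Df(x)(w · L(w))`; i.e.
`|F(σ_x(w)) − F(x_W) − Df(x)(w · L(w))| / ∥w∥ → 0` as `W ∋ w → 0`. -/
theorem stmt_13 (n k : ℕ) (d : (Fin (2*n+1) → ℝ) → (Fin (2*n+1) → ℝ) → ℝ)
    (hd : IsHomDist n d) (W V : Set (Fin (2*n+1) → ℝ))
    (hW : IsVertical n W) (hV : IsHorizontal n V) (hWV : IsSemidirect n W V)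
    (U : Set (Fin (2*n+1) → ℝ)) (hUW : U ⊆ W) (hUopen : ∃ O, IsOpen O ∧ U = O ∩ W)
    (Ω : Set (Fin (2*n+1) → ℝ)) (hΩ : IsOpen Ω)
    (φ : (Fin (2*n+1) → ℝ) → (Fin (2*n+1) → ℝ)) (hφ : ∀ w ∈ U, φ w ∈ V)
    (hΦU : ∀ w ∈ U, hmul n w (φ w) ∈ Ω)
    (ζ : Fin (2*n+1) → ℝ) (hζ : ζ ∈ U)
    (x : Fin (2*n+1) → ℝ) (hx : x = hmul n ζ (φ ζ))
    (f : (Fin (2*n+1) → ℝ) → EuclideanSpace ℝ (Fin k))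
    (Df : (Fin (2*n+1) → ℝ) → EuclideanSpace ℝ (Fin k))
    (hf : PansuDiffAt n k d f Df x)
    (L : (Fin (2*n+1) → ℝ) → (Fin (2*n+1) → ℝ))
    (hL : IntrinsicDiffAt n d W V φ L ζ) :
    Tendsto (fun w =>
        ‖(f (hmul n (hmul n (hmul n x w) (-(φ ζ))) (φ (hmul n (hmul n x w) (-(φ ζ)))))
            - f x) - Df (hmul n w (L w))‖ / d w 0)
      (𝓝[W \ {0}] 0) (𝓝 0) := by
  subst hx
  obtain ⟨hDf, hPansu⟩ := hf
  obtain ⟨hLh, hLV, hIntr⟩ := hL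
  obtain ⟨c₀, hc₀, C₀, hC₀, hcomp⟩ := dist_compare hd
  obtain ⟨KD, hKD0, hKD⟩ := Df_bound hDf
  obtain ⟨KL, hKL0, hKL⟩ := L_bound hLh hW hV hLV
  set l := 𝓝[W \ {0}] (0 : Fin (2*n+1) → ℝ) with hl
  set x : Fin (2*n+1) → ℝ := hmul n ζ (φ ζ) with hxdef
  set φ' : (Fin (2*n+1) → ℝ) → Fin (2*n+1) → ℝ :=
    fun w => hmul n (-(φ ζ)) (φ (hmul n (hmul n x w) (-(φ ζ)))) with hφ'def
  set η : (Fin (2*n+1) → ℝ) → Fin (2*n+1) → ℝ := fun w => hmul n w (φ' w) with hηdef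
  -- key algebraic identity
  have key : ∀ w, hmul n x (η w)
      = hmul n (hmul n (hmul n x w) (-(φ ζ))) (φ (hmul n (hmul n x w) (-(φ ζ)))) := by
    intro w
    conv_rhs => rw [hmul_assoc, hmul_assoc]
  have dpos : ∀ w : Fin (2*n+1) → ℝ, w ≠ 0 → 0 < d w 0 := fun w hw =>
    lt_of_le_of_ne (d_nonneg hd w 0) (fun h => hw ((hd.eq_zero_iff w 0).mp h.symm))
  -- Lipschitz bound for Df
  have DfLip : ∀ a b, ‖Df a - Df b‖ ≤ (KD / c₀) * d a b := by
    intro a b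
    rw [← Df_hmul_diff hDf a b]
    calc ‖Df (hmul n (-b) a)‖ ≤ KD * ‖hpart n (hmul n (-b) a)‖ := hKD _
    _ ≤ KD * hgauge n (hmul n (-b) a) :=
        mul_le_mul_of_nonneg_left (hpart_norm_le_hgauge n _) hKD0
    _ ≤ KD * (d (hmul n (-b) a) 0 / c₀) := by
        apply mul_le_mul_of_nonneg_left _ hKD0
        rw [le_div_iff₀ hc₀]
        have := (hcomp (hmul n (-b) a)).1
        linarith
    _ = (KD / c₀) * d a b := by rw [← d_eq_hmul hd]; ring
  -- bound for L on W
  set C₂ := C₀ * KL / c₀ with hC₂def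
  have hC₂0 : 0 ≤ C₂ := by positivity
  have hLd : ∀ w ∈ W, d (L w) 0 ≤ C₂ * d w 0 := by
    intro w hw
    have hLlast : L w (lIdx n) = 0 := hV.2 (hLV ⟨w, hw, rfl⟩)
    have h2 : hgauge n (L w) = ‖hpart n (L w)‖ := by
      unfold hgauge
      rw [hLlast]
      simp [max_eq_left (norm_nonneg _)]
    have h3 : ‖hpart n (L w)‖ ≤ ‖L w‖ := hpart_norm_le_norm n _
    have h4 : ‖L w‖ ≤ KL * ‖hpart n w‖ := hKL w hw
    have h5 : ‖hpart n w‖ ≤ hgauge n w := hpart_norm_le_hgauge n w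
    have h6 : c₀ * hgauge n w ≤ d w 0 := (hcomp w).1
    have h7 : d (L w) 0 ≤ C₀ * hgauge n (L w) := (hcomp (L w)).2
    have h8 : hgauge n w ≤ d w 0 / c₀ := by rw [le_div_iff₀ hc₀]; linarith
    calc d (L w) 0 ≤ C₀ * hgauge n (L w) := h7
    _ = C₀ * ‖hpart n (L w)‖ := by rw [h2]
    _ ≤ C₀ * (KL * (d w 0 / c₀)) := by
        apply mul_le_mul_of_nonneg_left _ (le_of_lt hC₀)
        calc ‖hpart n (L w)‖ ≤ ‖L w‖ := h3
        _ ≤ KL * ‖hpart n w‖ := h4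
        _ ≤ KL * (d w 0 / c₀) := by
            apply mul_le_mul_of_nonneg_left _ hKL0
            linarith
    _ = C₂ * d w 0 := by rw [hC₂def]; ring
  -- intrinsic differentiability as a limit
  have hR : Tendsto (fun w => d (L w) (φ' w) / d w 0) l (𝓝 0) := by
    simp only [hφ'def, hxdef]
    exact hIntr
  -- d w 0 → 0 along l
  have hdw : Tendsto (fun w : Fin (2*n+1) → ℝ => d w 0) l (𝓝 0) := by
    have hc : Continuous fun w : Fin (2*n+1) → ℝ => d w 0 :=
      hd.continuous.comp (continuous_id.prodMk continuous_const)
    have h0 := hc.tendsto 0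
    rw [d_self hd] at h0
    exact h0.mono_left nhdsWithin_le_nhds
  -- key eventual inequality for d (η w) 0
  have hev1 : ∀ᶠ w in l, d (η w) 0 ≤ (d (L w) (φ' w) / d w 0 + C₂ + 1) * d w 0 := by
    filter_upwards [eventually_mem_nhdsWithin] with w hw
    obtain ⟨hwW, hw0⟩ := hw
    have hdw0 : 0 < d w 0 := dpos w (by simpa using hw0)
    have t1 : d (η w) 0 ≤ d (η w) w + d w 0 := hd.triangle _ _ _
    have t2 : d (η w) w = d (φ' w) 0 := by
      have h := hd.leftInvariant w (φ' w) 0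
      rw [hmul_zero_right] at h
      rw [hηdef]
      exact h
    have t3 : d (φ' w) 0 ≤ d (φ' w) (L w) + d (L w) 0 := hd.triangle _ _ _
    have t4 : d (φ' w) (L w) = d (L w) (φ' w) := hd.symm _ _
    have t5 : d (L w) (φ' w) = d (L w) (φ' w) / d w 0 * d w 0 := by
      field_simp
    have t6 := hLd w hwW
    have t7 : (d (L w) (φ' w) / d w 0 + C₂ + 1) * d w 0
        = d (L w) (φ' w) / d w 0 * d w 0 + C₂ * d w 0 + d w 0 := by ring
    linarith
  -- d (η w) 0 → 0 and η → 0
  have hdη : Tendsto (fun w => d (η w) 0) l (𝓝 0) := by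
    have hg : Tendsto (fun w => (d (L w) (φ' w) / d w 0 + C₂ + 1) * d w 0) l
        (𝓝 ((0 + C₂ + 1) * 0)) := ((hR.add_const C₂).add_const 1).mul hdw
    rw [show (0 + C₂ + 1) * 0 = 0 by ring] at hg
    exact squeeze_zero' (Eventually.of_forall fun w => d_nonneg hd _ _) hev1 hg
  have hη0 : Tendsto η l (𝓝 0) := by
    rw [tendsto_zero_iff_norm_tendsto_zero]
    have hbound : ∀ w, ‖η w‖ ≤ d (η w) 0 / c₀ + (d (η w) 0 / c₀)^2 := by
      intro w
      have h1 := norm_le_hgauge n (η w)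
      have h2 : hgauge n (η w) ≤ d (η w) 0 / c₀ := by
        rw [le_div_iff₀ hc₀]
        have := (hcomp (η w)).1
        linarith
      have h3 := hgauge_nonneg n (η w)
      nlinarith
    have hg : Tendsto (fun w => d (η w) 0 / c₀ + (d (η w) 0 / c₀)^2) l
        (𝓝 (0 / c₀ + (0 / c₀)^2)) := (hdη.div_const c₀).add ((hdη.div_const c₀).pow 2)
    rw [show (0:ℝ) / c₀ + ((0:ℝ) / c₀)^2 = 0 by simp] at hg
    exact squeeze_zero' (Eventually.of_forall fun w => norm_nonneg _)
      (Eventually.of_forall hbound) hg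
  -- the Pansu residual term
  have hNd : Tendsto (fun w => ‖f (hmul n x (η w)) - f x - Df (η w)‖ / d w 0) l (𝓝 0) := by
    rw [Metric.tendsto_nhds]
    intro ε hε
    have hC2pos : (0:ℝ) < C₂ + 2 := by linarith
    have hε'pos : 0 < ε / (C₂ + 2) := div_pos hε hC2pos
    have hP := Metric.tendsto_nhds.mp hPansu (ε / (C₂ + 2)) hε'pos
    rw [eventually_nhdsWithin_iff] at hP
    have hP2 := hη0.eventually hP
    have hRsmall : ∀ᶠ w in l, d (L w) (φ' w) / d w 0 ≤ 1 := by
      have h1 := Metric.tendsto_nhds.mp hR 1 one_pos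
      filter_upwards [h1] with w hw
      rw [Real.dist_eq, sub_zero] at hw
      exact le_of_lt (abs_lt.mp hw).2
    filter_upwards [hP2, hRsmall, eventually_mem_nhdsWithin, hev1] with w h1 h2 hw hbd
    obtain ⟨hwW, hw0⟩ := hw
    have hdw0 : 0 < d w 0 := dpos w (by simpa using hw0)
    rw [Real.dist_eq, sub_zero,
      abs_of_nonneg (div_nonneg (norm_nonneg _) (le_of_lt hdw0))]
    by_cases hηw : η w = 0
    · rw [hηw, hmul_zero_right, Df_zero hDf]
      simpa using hε
    · have hdη0 : 0 < d (η w) 0 := dpos _ hηw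
      have heq : ‖f (hmul n x (η w)) - f x - Df (η w)‖ / d w 0
          = (‖f (hmul n x (η w)) - f x - Df (η w)‖ / d (η w) 0) * (d (η w) 0 / d w 0) := by
        field_simp
      rw [heq]
      have hT1 : ‖f (hmul n x (η w)) - f x - Df (η w)‖ / d (η w) 0 < ε / (C₂ + 2) := by
        have h1' := h1 (by simpa using hηw)
        rw [Real.dist_eq, sub_zero] at h1'
        exact lt_of_le_of_lt (le_abs_self _) h1'
      have hT0 : 0 ≤ ‖f (hmul n x (η w)) - f x - Df (η w)‖ / d (η w) 0 :=
        div_nonneg (norm_nonneg _) (d_nonneg hd _ _)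
      have hratio : d (η w) 0 / d w 0 ≤ C₂ + 2 := by
        rw [div_le_iff₀ hdw0]
        calc d (η w) 0 ≤ (d (L w) (φ' w) / d w 0 + C₂ + 1) * d w 0 := hbd
        _ ≤ (C₂ + 2) * d w 0 := by nlinarith
      calc (‖f (hmul n x (η w)) - f x - Df (η w)‖ / d (η w) 0) * (d (η w) 0 / d w 0)
          ≤ (‖f (hmul n x (η w)) - f x - Df (η w)‖ / d (η w) 0) * (C₂ + 2) :=
          mul_le_mul_of_nonneg_left hratio hT0
      _ < (ε / (C₂ + 2)) * (C₂ + 2) := mul_lt_mul_of_pos_right hT1 hC2pos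
      _ = ε := by field_simp
  -- final assembly
  have hfinal : Tendsto (fun w => ‖f (hmul n x (η w)) - f x - Df (η w)‖ / d w 0
      + (KD / c₀) * (d (L w) (φ' w) / d w 0)) l (𝓝 (0 + (KD / c₀) * 0)) :=
    hNd.add (hR.const_mul _)
  rw [show (0:ℝ) + (KD / c₀) * 0 = 0 by ring] at hfinal
  apply squeeze_zero'
    (Eventually.of_forall fun w => div_nonneg (norm_nonneg _) (d_nonneg hd _ _)) _ hfinal
  filter_upwards [eventually_mem_nhdsWithin] with w hw
  obtain ⟨hwW, hw0⟩ := hw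
  have hdw0 : 0 < d w 0 := dpos w (by simpa using hw0)
  rw [← key w]
  have hsplit : f (hmul n x (η w)) - f x - Df (hmul n w (L w))
      = (f (hmul n x (η w)) - f x - Df (η w)) + (Df (φ' w) - Df (L w)) := by
    have e1 : Df (η w) = Df w + Df (φ' w) := by rw [hηdef]; exact hDf.1 _ _
    have e2 : Df (hmul n w (L w)) = Df w + Df (L w) := hDf.1 _ _
    rw [e1, e2]; abel
  have hB : ‖Df (φ' w) - Df (L w)‖ / d w 0 ≤ (KD / c₀) * (d (L w) (φ' w) / d w 0) := by
    have h1 := DfLip (φ' w) (L w)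
    rw [hd.symm (φ' w) (L w)] at h1
    calc ‖Df (φ' w) - Df (L w)‖ / d w 0 ≤ ((KD / c₀) * d (L w) (φ' w)) / d w 0 :=
        (div_le_div_iff_of_pos_right hdw0).mpr h1
    _ = (KD / c₀) * (d (L w) (φ' w) / d w 0) := by ring
  calc ‖f (hmul n x (η w)) - f x - Df (hmul n w (L w))‖ / d w 0
      ≤ (‖f (hmul n x (η w)) - f x - Df (η w)‖ + ‖Df (φ' w) - Df (L w)‖) / d w 0 := by
        rw [hsplit]
        exact (div_le_div_iff_of_pos_right hdw0).mpr (norm_add_le _ _)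
  _ = ‖f (hmul n x (η w)) - f x - Df (η w)‖ / d w 0 + ‖Df (φ' w) - Df (L w)‖ / d w 0 :=
      add_div _ _ _
  _ ≤ ‖f (hmul n x (η w)) - f x - Df (η w)‖ / d w 0
      + (KD / c₀) * (d (L w) (φ' w) / d w 0) := by linarith
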